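/- Let (P+Q,ω) be a labeled disjoint union of posets with |P| = p, |P+Q| = n, and s ∈ P with ω(s) > ω(t) for all t ∈ Q. Then as formal power series, (1 − q^n)·G_{P+Q;s}(q) = (1 − q^p)·G_{P;s}(q)·G_Q(q), where G_{R;s}(q) is the generating function for (R,ω;s)-partitions by size and G_Q(q) the generating function for Q-partitions by size. -/

import Mathlib

open Finset Polynomial
open scoped Classical

/-- The set of linear extensions of a finite poset `P`, i.e. order-preserving
bijections `P ≃ Fin n`. -/
noncomputable def linExts (P : Type) [Fintype P] [PartialOrder P] (n : ℕ) :
    Finset (P ≃ Fin n) :=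
  Finset.univ.filter fun f => ∀ x y : P, x ≤ y → f x ≤ f y

/-- The word of a linear extension `f` with respect to the labeling `ω`. -/
def word {P : Type} {n : ℕ} (ω : P → ℕ) (f : P ≃ Fin n) : Fin n → ℕ :=
  fun i => ω (f.symm i)

/-- The major index of a word: the sum of the (1-indexed) descent positions. -/
def majW {n : ℕ} (w : Fin n → ℕ) : ℕ :=
  ∑ i : Fin n, if h : (i : ℕ) + 1 < n then
    (if w ⟨(i : ℕ) + 1, h⟩ < w i then (i : ℕ) + 1 else 0) else 0

/-- The number of inversions of a word. -/
noncomputable def invW {n : ℕ} (w : Fin n → ℕ) : ℕ :=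
  ((Finset.univ : Finset (Fin n × Fin n)).filter
    (fun p => p.1 < p.2 ∧ w p.2 < w p.1)).card

/-- Major index `q`-analogue of the number of linear extensions of `(P, ω)`. -/
noncomputable def eMaj (P : Type) [Fintype P] [PartialOrder P] (ω : P → ℕ) :
    Polynomial ℤ :=
  ∑ f ∈ linExts P (Fintype.card P), Polynomial.X ^ majW (word ω f)

/-- Inversion `q`-analogue of the number of linear extensions of `(P, ω)`. -/
noncomputable def eInv (P : Type) [Fintype P] [PartialOrder P] (ω : P → ℕ) :
    Polynomial ℤ :=
  ∑ f ∈ linExts P (Fintype.card P), Polynomial.X ^ invW (word ω f)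

/-- Major index `q`-analogue of linear extensions whose last letter is the label
of an element of `S`. -/
noncomputable def eMajEndIn (P : Type) [Fintype P] [PartialOrder P]
    (ω : P → ℕ) (S : Set P) : Polynomial ℤ :=
  ∑ f ∈ (linExts P (Fintype.card P)).filter (fun f => ∃ s ∈ S, ∀ x, f x ≤ f s),
    Polynomial.X ^ majW (word ω f)

/-- The Gaussian binomial coefficient `[n choose k]_q`, defined by the
`q`-Pascal recurrence. -/
noncomputable def qBinom : ℕ → ℕ → Polynomial ℤ
  | _, 0 => 1
  | 0, _ + 1 => 0
  | n + 1, k + 1 => qBinom n k + Polynomial.X ^ (k + 1) * qBinom n (k + 1)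

/-- `(P,ω)`-partition. -/
def IsPPart {α : Type} [PartialOrder α] (ω : α → ℕ) (f : α → ℕ) : Prop :=
  ∀ s t : α, s ≤ t → f t ≤ f s ∧ (ω t < ω s → f t < f s)

/-- `(P,ω;s)`-partition. -/
def IsPPartS {α : Type} [PartialOrder α] (ω : α → ℕ) (s : α) (f : α → ℕ) : Prop :=
  IsPPart ω f ∧ (∀ t, f s ≤ f t) ∧ ∀ t, t ≠ s → f s = f t → ω t < ω s

/-- Generating function by size for the maps `α → ℕ` satisfying `pred`. -/
noncomputable def GPart (α : Type) [Fintype α] (pred : (α → ℕ) → Prop) :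
    PowerSeries ℚ :=
  PowerSeries.mk fun m => (Set.ncard {f : α → ℕ | pred f ∧ ∑ t, f t = m} : ℚ)

noncomputable def cntF (α : Type) [Fintype α] (pred : (α → ℕ) → Prop) (m : ℕ) :
    Finset (α → ℕ) :=
  (Fintype.piFinset fun _ : α => Finset.range (m + 1)).filter fun f =>
    pred f ∧ ∑ t, f t = m

lemma mem_cntF {α : Type} [Fintype α] {pred : (α → ℕ) → Prop} {m : ℕ} {f : α → ℕ} :
    f ∈ cntF α pred m ↔ pred f ∧ ∑ t, f t = m := by
  simp only [cntF, Finset.mem_filter, Fintype.mem_piFinset, Finset.mem_range]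
  refine ⟨fun h => h.2, fun h => ⟨fun t => ?_, h⟩⟩
  have := Finset.single_le_sum (f := f) (fun i _ => Nat.zero_le _) (Finset.mem_univ t)
  omega

lemma coeff_GPart {α : Type} [Fintype α] (pred : (α → ℕ) → Prop) (m : ℕ) :
    PowerSeries.coeff m (GPart α pred) = ((cntF α pred m).card : ℚ) := by
  have hset : {f : α → ℕ | pred f ∧ ∑ t, f t = m} = ↑(cntF α pred m) := by
    ext f; simp [mem_cntF]
  rw [GPart, PowerSeries.coeff_mk, hset, Set.ncard_coe_finset]

lemma card_shift {α : Type} [Fintype α] (pred : (α → ℕ) → Prop) (s : α)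
    (hmin : ∀ f, pred f → ∀ t, f s ≤ f t)
    (hup : ∀ f, pred f → pred fun t => f t + 1)
    (hdown : ∀ f, pred f → 1 ≤ f s → pred fun t => f t - 1) (m : ℕ) :
    (cntF α pred m).card
      = (cntF α (fun f => pred f ∧ f s = 0) m).card
        + if Fintype.card α ≤ m then (cntF α pred (m - Fintype.card α)).card else 0 := by
  classical
  have h0 : (cntF α pred m).filter (fun f => f s = 0)
      = cntF α (fun f => pred f ∧ f s = 0) m := by
    ext f; simp only [Finset.mem_filter, mem_cntF]; tauto
  by_cases hnm : Fintype.card α ≤ m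
  · have h1 : ((cntF α pred m).filter fun f => ¬ f s = 0).card
        = (cntF α pred (m - Fintype.card α)).card := by
      apply Finset.card_nbij' (i := fun f t => f t - 1) (j := fun g t => g t + 1)
      · intro f hf
        simp only [Finset.mem_coe, Finset.mem_filter, mem_cntF] at hf
        obtain ⟨⟨hp, hsum⟩, hfs⟩ := hf
        have h1 : ∀ t, 1 ≤ f t := fun t => le_trans (show 1 ≤ f s by omega) (hmin f hp t)
        refine mem_cntF.2 ⟨hdown f hp (h1 s), ?_⟩
        show ∑ t, (f t - 1) = m - Fintype.card α
        have he : ∑ t, f t = ∑ t, ((f t - 1) + 1) :=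
          Finset.sum_congr rfl fun t _ => by have := h1 t; omega
        rw [Finset.sum_add_distrib] at he
        simp only [Finset.sum_const, Finset.card_univ, smul_eq_mul, mul_one] at he
        omega
      · intro g hg
        rw [Finset.mem_coe, mem_cntF] at hg
        obtain ⟨hp, hsum⟩ := hg
        simp only [Finset.mem_coe, Finset.mem_filter, mem_cntF]
        refine ⟨⟨hup g hp, ?_⟩, by omega⟩
        rw [Finset.sum_add_distrib, hsum, Finset.sum_const, Finset.card_univ]
        simp only [smul_eq_mul, mul_one]
        omega
      · intro f hf
        simp only [Finset.mem_coe, Finset.mem_filter, mem_cntF] at hf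
        obtain ⟨⟨hp, hsum⟩, hfs⟩ := hf
        have h1 : ∀ t, 1 ≤ f t := fun t => le_trans (show 1 ≤ f s by omega) (hmin f hp t)
        funext t; have := h1 t; simp; omega
      · intro g _; funext t; simp
    have hsplit := Finset.card_filter_add_card_filter_not
      (s := cntF α pred m) (p := fun f => f s = 0)
    rw [if_pos hnm, ← hsplit, h0, h1]
  · have h1 : ((cntF α pred m).filter fun f => ¬ f s = 0) = ∅ := by
      rw [Finset.filter_eq_empty_iff]
      intro f hf
      rw [mem_cntF] at hf
      obtain ⟨hp, hsum⟩ := hf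
      by_contra hfs
      have h1 : ∀ t, 1 ≤ f t := fun t => le_trans (show 1 ≤ f s by omega) (hmin f hp t)
      have hcard : Fintype.card α ≤ ∑ t, f t := by
        calc Fintype.card α = ∑ _t : α, 1 := by simp
        _ ≤ ∑ t, f t := Finset.sum_le_sum fun t _ => h1 t
      omega
    have hsplit := Finset.card_filter_add_card_filter_not
      (s := cntF α pred m) (p := fun f => f s = 0)
    rw [if_neg hnm, ← hsplit, h0, h1, Finset.card_empty]

lemma card_split (P Q : Type) [Fintype P] [Fintype Q]
    (predA : (P ⊕ Q → ℕ) → Prop) (predB : (P → ℕ) → Prop) (predC : (Q → ℕ) → Prop)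
    (hiff : ∀ f, predA f ↔ predB (f ∘ Sum.inl) ∧ predC (f ∘ Sum.inr)) (m : ℕ) :
    (cntF (P ⊕ Q) predA m).card
      = ∑ ab ∈ Finset.HasAntidiagonal.antidiagonal m, (cntF P predB ab.1).card * (cntF Q predC ab.2).card := by
  classical
  have hG : ((Finset.HasAntidiagonal.antidiagonal m).biUnion
        (fun ab => cntF P predB ab.1 ×ˢ cntF Q predC ab.2)).card
      = ∑ ab ∈ Finset.HasAntidiagonal.antidiagonal m, (cntF P predB ab.1).card * (cntF Q predC ab.2).card := by
    rw [Finset.card_biUnion]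
    · exact Finset.sum_congr rfl fun ab _ => Finset.card_product _ _
    · intro ab _ cd _ hne
      simp only [Finset.disjoint_left]
      intro gh h1 h2
      simp only [Finset.mem_product, mem_cntF] at h1 h2
      apply hne
      have := h1.1.2; have := h1.2.2; have := h2.1.2; have := h2.2.2
      ext <;> omega
  rw [← hG]
  apply Finset.card_nbij' (i := fun f => (f ∘ Sum.inl, f ∘ Sum.inr))
    (j := fun gh => Sum.elim gh.1 gh.2)
  · intro f hf
    rw [Finset.mem_coe, mem_cntF] at hf
    obtain ⟨hp, hsum⟩ := hf
    rw [Finset.mem_coe, Finset.mem_biUnion]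
    refine ⟨(∑ t, f (Sum.inl t), ∑ t, f (Sum.inr t)), ?_, ?_⟩
    · rw [Finset.HasAntidiagonal.mem_antidiagonal, ← Fintype.sum_sum_type, hsum]
    · rw [Finset.mem_product, mem_cntF, mem_cntF]
      exact ⟨⟨(hiff f).1 hp |>.1, rfl⟩, ⟨(hiff f).1 hp |>.2, rfl⟩⟩
  · intro gh hgh
    rw [Finset.mem_coe, Finset.mem_biUnion] at hgh
    obtain ⟨ab, hab, hmem⟩ := hgh
    rw [Finset.HasAntidiagonal.mem_antidiagonal] at hab
    rw [Finset.mem_product, mem_cntF, mem_cntF] at hmem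
    rw [Finset.mem_coe, mem_cntF]
    constructor
    · rw [hiff]
      exact ⟨by simpa using hmem.1.1, by simpa using hmem.2.1⟩
    · rw [Fintype.sum_sum_type]
      simp only [Sum.elim_inl, Sum.elim_inr]
      rw [hmem.1.2, hmem.2.2, hab]
  · intro f _; funext t; cases t <;> rfl
  · intro gh _; rfl

lemma GPart_shift {α : Type} [Fintype α] (pred : (α → ℕ) → Prop) (s : α)
    (hmin : ∀ f, pred f → ∀ t, f s ≤ f t)
    (hup : ∀ f, pred f → pred fun t => f t + 1)
    (hdown : ∀ f, pred f → 1 ≤ f s → pred fun t => f t - 1) :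
    (1 - (PowerSeries.X : PowerSeries ℚ) ^ Fintype.card α) * GPart α pred
      = GPart α fun f => pred f ∧ f s = 0 := by
  ext m
  rw [sub_mul, one_mul, map_sub, PowerSeries.coeff_X_pow_mul', coeff_GPart, coeff_GPart,
    coeff_GPart, card_shift pred s hmin hup hdown m]
  push_cast
  split_ifs <;> simp

lemma GPart_split (P Q : Type) [Fintype P] [Fintype Q]
    (predA : (P ⊕ Q → ℕ) → Prop) (predB : (P → ℕ) → Prop) (predC : (Q → ℕ) → Prop)
    (hiff : ∀ f, predA f ↔ predB (f ∘ Sum.inl) ∧ predC (f ∘ Sum.inr)) :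
    GPart (P ⊕ Q) predA = GPart P predB * GPart Q predC := by
  ext m
  rw [PowerSeries.coeff_mul, coeff_GPart, card_split P Q predA predB predC hiff m]
  push_cast
  exact Finset.sum_congr rfl fun ab _ => by rw [coeff_GPart, coeff_GPart]

lemma IsPPartS_min {α : Type} [PartialOrder α] {ω : α → ℕ} {s : α} {f : α → ℕ}
    (hf : IsPPartS ω s f) : ∀ t, f s ≤ f t := hf.2.1

lemma IsPPartS_up {α : Type} [PartialOrder α] {ω : α → ℕ} {s : α} {f : α → ℕ}
    (hf : IsPPartS ω s f) : IsPPartS ω s fun t => f t + 1 := by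
  obtain ⟨h1, h2, h3⟩ := hf
  refine ⟨fun a b hab => ?_, fun t => ?_, fun t ht he => ?_⟩
  · obtain ⟨hw, hst⟩ := h1 a b hab
    refine ⟨?_, fun h => ?_⟩
    · show f b + 1 ≤ f a + 1; omega
    · show f b + 1 < f a + 1; have := hst h; omega
  · show f s + 1 ≤ f t + 1; have := h2 t; omega
  · have he' : f s + 1 = f t + 1 := he
    exact h3 t ht (by omega)

lemma IsPPartS_down {α : Type} [PartialOrder α] {ω : α → ℕ} {s : α} {f : α → ℕ}
    (hf : IsPPartS ω s f) (h1s : 1 ≤ f s) : IsPPartS ω s fun t => f t - 1 := by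
  obtain ⟨h1, h2, h3⟩ := hf
  have hall : ∀ t, 1 ≤ f t := fun t => le_trans h1s (h2 t)
  refine ⟨fun a b hab => ?_, fun t => ?_, fun t ht he => ?_⟩
  · obtain ⟨hw, hst⟩ := h1 a b hab
    have := hall a; have := hall b
    refine ⟨?_, fun h => ?_⟩
    · show f b - 1 ≤ f a - 1; omega
    · show f b - 1 < f a - 1; have := hst h; omega
  · show f s - 1 ≤ f t - 1; have := h2 t; have := hall t; omega
  · have he' : f s - 1 = f t - 1 := he
    refine h3 t ht ?_
    have := hall t; have := h2 t; omega


/-- For a labeled disjoint union `P + Q` with `s ∈ P` whose label exceeds every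
label of `Q`: `(1 - q^n)·G_{P+Q;s}(q) = (1 - q^p)·G_{P;s}(q)·G_Q(q)`. -/
theorem GPartS_sum_poset (P Q : Type) [Fintype P] [Fintype Q] [PartialOrder P]
    [PartialOrder Q] (ω : P ⊕ Q → ℕ) (hinj : Function.Injective ω) (s : P)
    (hs : ∀ t : Q, ω (Sum.inr t) < ω (Sum.inl s)) :
    (1 - (PowerSeries.X : PowerSeries ℚ) ^ Fintype.card (P ⊕ Q)) *
        GPart (P ⊕ Q) (IsPPartS ω (Sum.inl s)) =
      (1 - (PowerSeries.X : PowerSeries ℚ) ^ Fintype.card P) *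
          GPart P (IsPPartS (ω ∘ Sum.inl) s) *
        GPart Q (IsPPart (ω ∘ Sum.inr)) := by

  have hA := GPart_shift (IsPPartS ω (Sum.inl s)) (Sum.inl s)
    (fun f hf => hf.2.1) (fun f hf => IsPPartS_up hf) (fun f hf h => IsPPartS_down hf h)
  have hB := GPart_shift (IsPPartS (ω ∘ Sum.inl) s) s
    (fun f hf => hf.2.1) (fun f hf => IsPPartS_up hf) (fun f hf h => IsPPartS_down hf h)
  have hiff : ∀ f : P ⊕ Q → ℕ, (IsPPartS ω (Sum.inl s) f ∧ f (Sum.inl s) = 0)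
      ↔ (IsPPartS (ω ∘ Sum.inl) s (f ∘ Sum.inl) ∧ (f ∘ Sum.inl) s = 0)
        ∧ IsPPart (ω ∘ Sum.inr) (f ∘ Sum.inr) := by
    intro f
    constructor
    · rintro ⟨⟨h1, h2, h3⟩, h0⟩
      refine ⟨⟨⟨fun a b hab => h1 _ _ (Sum.inl_le_inl_iff.2 hab),
        fun t => h2 (Sum.inl t),
        fun t ht he => h3 (Sum.inl t) (by simpa using ht) he⟩, h0⟩,
        fun a b hab => h1 _ _ (Sum.inr_le_inr_iff.2 hab)⟩
    · rintro ⟨⟨⟨h1, h2, h3⟩, h0⟩, h4⟩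
      refine ⟨⟨fun a b hab => ?_, fun t => ?_, fun t ht he => ?_⟩, h0⟩
      · rcases a with a | a <;> rcases b with b | b
        · exact h1 a b (Sum.inl_le_inl_iff.1 hab)
        · exact absurd hab Sum.not_inl_le_inr
        · exact absurd hab Sum.not_inr_le_inl
        · exact h4 a b (Sum.inr_le_inr_iff.1 hab)
      · simp only [Function.comp_apply] at h0
        rw [h0]; exact Nat.zero_le _
      · rcases t with t | t
        · exact h3 t (by simpa using ht) he
        · exact hs t
  have hSplit := GPart_split P Q
    (fun f => IsPPartS ω (Sum.inl s) f ∧ f (Sum.inl s) = 0)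
    (fun g => IsPPartS (ω ∘ Sum.inl) s g ∧ g s = 0)
    (IsPPart (ω ∘ Sum.inr)) hiff
  rw [hA, hSplit, ← hB]
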